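/- Hessian quotient implicit function: For 0 ≤ l < k ≤ n, define γ̃(x,y) = ((C(n−1,l)/C(n−1,k))^{1/(k−l)}) · y · ((C(n−1,k)y + C(n−1,k−1)x)/(C(n−1,l)y + C(n−1,l−1)x))^{1/(k−l)} (the normalized Hessian quotient restricted to (x,y,…,y)). Then for (y,z) in the region {z·((n−k)/(n−l))^{1/(k−l)} < y < z}, the unique x > 0 solving γ̃(x,y) = z is x = g₊(y,z) = C(n−1,k)·y·(z^{k−l} − y^{k−l}) / (C(n−1,k−1)·y^{k−l} − (C(n−1,k)C(n−1,l−1)/C(n−1,l))·z^{k−l}). -/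

import Mathlib

open Real

/-- Explicit implicit function for normalized Hessian quotients restricted to
`(x,y,…,y)`: in the region `z·((n−k)/(n−l))^{1/(k−l)} < y < z`, `0 < y`, the unique
`x > 0` with `γ̃(x,y) = z` is the stated rational expression. -/
theorem stmt10 (n k l : ℕ) (hl : l < k) (hk : k ≤ n)
    (y z x : ℝ) (hx : 0 < x) (hy : 0 < y) (hz : 0 < z)
    (hy1 : z * (((n : ℝ) - k) / ((n : ℝ) - l)) ^ (1 / ((k : ℝ) - l)) < y)
    (hy2 : y < z) :
    let Cnk : ℝ := ((n - 1).choose k : ℝ)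
    let Cnk1 : ℝ := ((n - 1).choose (k - 1) : ℝ)
    let Cnl : ℝ := ((n - 1).choose l : ℝ)
    let Cnl1 : ℝ := if l = 0 then 0 else ((n - 1).choose (l - 1) : ℝ)
    let γ : ℝ → ℝ → ℝ := fun x' y' =>
      (Cnl / Cnk) ^ (1 / ((k : ℝ) - l)) * y' *
        ((Cnk * y' + Cnk1 * x') / (Cnl * y' + Cnl1 * x')) ^ (1 / ((k : ℝ) - l))
    (γ x y = z ↔
      x = Cnk * y * (z ^ ((k : ℝ) - l) - y ^ ((k : ℝ) - l)) /
            (Cnk1 * y ^ ((k : ℝ) - l) - (Cnk * Cnl1 / Cnl) * z ^ ((k : ℝ) - l))) := by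
  intro Cnk Cnk1 Cnl Cnl1 γ
  set m : ℕ := k - l with hm_def
  have hm : m ≠ 0 := by omega
  have hmkl : (k : ℝ) - l = (m : ℝ) := by
    rw [hm_def, Nat.cast_sub hl.le]
  have hinv : (1 : ℝ) / ((k : ℝ) - l) = ((m : ℝ))⁻¹ := by rw [hmkl, one_div]
  have hγdef : γ x y = (Cnl / Cnk) ^ ((m : ℝ))⁻¹ * y *
      ((Cnk * y + Cnk1 * x) / (Cnl * y + Cnl1 * x)) ^ ((m : ℝ))⁻¹ := by
    simp only [γ, hinv]
  rw [hmkl, Real.rpow_natCast z, Real.rpow_natCast y]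
  rcases eq_or_lt_of_le hk with rfl | hkn
  · -- case k = n
    have hCnk0 : Cnk = 0 := by
      simp only [Cnk]
      norm_cast
      exact Nat.choose_eq_zero_of_lt (by omega)
    have hγ0 : γ x y = 0 := by
      rw [hγdef, hCnk0, div_zero, Real.zero_rpow (by positivity), zero_mul, zero_mul]
    constructor
    · intro h; exact absurd (hγ0 ▸ h) hz.ne
    · intro h
      rw [hCnk0, zero_mul, zero_mul, zero_div] at h
      exact absurd h hx.ne'
  · -- case k < n
    have hCnk : 0 < Cnk := by
      simp only [Cnk]; exact_mod_cast Nat.choose_pos (by omega)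
    have hCnk1 : 0 < Cnk1 := by
      simp only [Cnk1]; exact_mod_cast Nat.choose_pos (by omega)
    have hCnl : 0 < Cnl := by
      simp only [Cnl]; exact_mod_cast Nat.choose_pos (by omega)
    have hCnl1 : 0 ≤ Cnl1 := by
      simp only [Cnl1]; split_ifs <;> positivity
    set A : ℝ := Cnk * y + Cnk1 * x with hA_def
    set B : ℝ := Cnl * y + Cnl1 * x with hB_def
    have hA : 0 < A := by positivity
    have hB : 0 < B := by positivity
    -- key inequality from hy1
    have hc : (0:ℝ) < ((n : ℝ) - k) / ((n : ℝ) - l) := by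
      apply div_pos <;> [skip; skip] <;>
        · rw [sub_pos]; exact_mod_cast by omega
    have hkey : z ^ m * (((n : ℝ) - k) / ((n : ℝ) - l)) < y ^ m := by
      have h1 : (z * (((n : ℝ) - k) / ((n : ℝ) - l)) ^ (1 / ((k : ℝ) - l))) ^ m < y ^ m :=
        pow_lt_pow_left₀ hy1 (by positivity) hm
      rwa [mul_pow, hinv, Real.rpow_inv_natCast_pow hc.le hm] at h1
    -- positivity of the (scaled) denominator
    have hD' : 0 < Cnl * Cnk1 * y ^ m - Cnk * Cnl1 * z ^ m := by
      rcases eq_or_ne l 0 with hl0 | hl0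
      · have h0 : Cnl1 = 0 := by simp [Cnl1, hl0]
        rw [h0, mul_zero, zero_mul, sub_zero]
        positivity
      · -- binomial identities
        have hid1 : Cnk * k = Cnk1 * ((n:ℝ) - k) := by
          simp only [Cnk, Cnk1]
          have h := Nat.choose_succ_right_eq (n-1) (k-1)
          rw [show k - 1 + 1 = k by omega, show n - 1 - (k - 1) = n - k by omega] at h
          have h' := congrArg (Nat.cast : ℕ → ℝ) h
          push_cast [Nat.cast_sub hk] at h'
          linarith [h']
        have hid2 : Cnl * l = Cnl1 * ((n:ℝ) - l) := by
          simp only [Cnl, Cnl1, if_neg hl0]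
          have h := Nat.choose_succ_right_eq (n-1) (l-1)
          rw [show l - 1 + 1 = l by omega, show n - 1 - (l - 1) = n - l by omega] at h
          have h' := congrArg (Nat.cast : ℕ → ℝ) h
          push_cast [Nat.cast_sub (by omega : l ≤ n)] at h'
          linarith [h']
        -- Cnk * Cnl1 * (n - l) = Cnk * Cnl * l ≤ ... < Cnl * Cnk1 * (n - k) scaled
        have hnl : (0:ℝ) < (n:ℝ) - l := by rw [sub_pos]; exact_mod_cast by omega
        have hnk : (0:ℝ) < (n:ℝ) - k := by rw [sub_pos]; exact_mod_cast hkn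
        have e1 : Cnk * Cnl1 * ((n:ℝ) - l) = Cnk * Cnl * (l:ℝ) := by
          linear_combination (-Cnk) * hid2
        have e2 : Cnl * Cnk1 * ((n:ℝ) - k) = Cnk * Cnl * (k:ℝ) := by
          linear_combination (-Cnl) * hid1
        have hlk : (l:ℝ) ≤ (k:ℝ) := by exact_mod_cast hl.le
        have hratio : Cnk * Cnl1 * ((n:ℝ) - l) ≤ Cnl * Cnk1 * ((n:ℝ) - k) := by
          rw [e1, e2]
          exact mul_le_mul_of_nonneg_left hlk (mul_pos hCnk hCnl).le
        have hzm : (0:ℝ) < z ^ m := pow_pos hz m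
        have h3 : Cnl * Cnk1 * (z ^ m * (((n : ℝ) - k) / ((n : ℝ) - l))) <
            Cnl * Cnk1 * y ^ m := by
          apply mul_lt_mul_of_pos_left hkey (by positivity)
        have h4 : Cnk * Cnl1 * z ^ m ≤ Cnl * Cnk1 * (z ^ m * (((n : ℝ) - k) / ((n : ℝ) - l))) := by
          rw [show Cnl * Cnk1 * (z ^ m * (((n : ℝ) - k) / ((n : ℝ) - l)))
              = Cnl * Cnk1 * (z ^ m * ((n:ℝ) - k)) / ((n:ℝ) - l) by ring,
            le_div_iff₀ hnl]
          linarith [mul_le_mul_of_nonneg_left hratio hzm.le]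
        linarith
    have hD'' : Cnk1 * y ^ m - Cnk * Cnl1 / Cnl * z ^ m
        = (Cnl * Cnk1 * y ^ m - Cnk * Cnl1 * z ^ m) / Cnl := by
      field_simp
    -- the power of gamma
    have hγm : (γ x y) ^ m = Cnl / Cnk * y ^ m * (A / B) := by
      rw [hγdef, mul_pow, mul_pow,
        Real.rpow_inv_natCast_pow (by positivity) hm,
        Real.rpow_inv_natCast_pow (by positivity) hm]
    have hγpos : 0 < γ x y := by
      rw [hγdef]
      have h1 : (0:ℝ) < (Cnl / Cnk) ^ ((m : ℝ))⁻¹ := Real.rpow_pos_of_pos (by positivity) _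
      have h2 : (0:ℝ) < (A / B) ^ ((m : ℝ))⁻¹ := Real.rpow_pos_of_pos (by positivity) _
      positivity
    have step1 : γ x y = z ↔ (γ x y) ^ m = z ^ m := by
      constructor
      · intro h; rw [h]
      · intro h
        exact (pow_left_strictMonoOn₀ hm).injOn hγpos.le hz.le h
    have step2 : (γ x y) ^ m = z ^ m ↔ Cnl * (y ^ m * A) = z ^ m * (Cnk * B) := by
      rw [hγm]
      have heq : Cnl / Cnk * y ^ m * (A / B) = Cnl * (y ^ m * A) / (Cnk * B) := by
        rw [div_mul_eq_mul_div, div_mul_div_comm, mul_assoc]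
      rw [heq, div_eq_iff (by positivity : Cnk * B ≠ 0)]
    rw [step1, step2, hD'', div_div_eq_mul_div, eq_div_iff hD'.ne']
    constructor
    · intro h
      simp only [hA_def, hB_def] at h
      linear_combination h
    · intro h
      simp only [hA_def, hB_def]
      linear_combination h
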